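/- Theorem 2.2, upper part: Suppose the upper probability mass function p̄ satisfies Σ_{ω ∈ Ω} p̄(ω) ≥ 1 (i.e. the associated lower prevision avoids sure loss). Then for every subset A ⊆ Ω, the upper natural extension of the indicator of A equals Ē_{p̄}(A) = min{U(A), 1}. -/

import Mathlib

/-- The upper natural extension of a gamble `f` with respect to the upper
probability mass function `pbar`. -/
noncomputable def upperExt {Ω : Type*} [Fintype Ω] [DecidableEq Ω]
    (pbar f : Ω → ℝ) : ℝ :=
  sInf {β : ℝ | ∃ lam : Ω → ℝ, (∀ ω, 0 ≤ lam ω) ∧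
    ∀ ω' : Ω, ∑ ω : Ω, lam ω * (pbar ω - (if ω' = ω then (1 : ℝ) else 0)) ≤ β - f ω'}

lemma lower_aux {Ω : Type*} [Fintype Ω] [DecidableEq Ω]
    (pbar : Ω → ℝ) (A : Finset Ω) (q : Ω → ℝ)
    (hq0 : ∀ ω, 0 ≤ q ω) (hqp : ∀ ω, q ω ≤ pbar ω) (hq1 : ∑ ω, q ω = 1)
    (β : ℝ) (lam : Ω → ℝ) (hlam : ∀ ω, 0 ≤ lam ω)
    (h : ∀ ω' : Ω, ∑ ω : Ω, lam ω * (pbar ω - (if ω' = ω then (1 : ℝ) else 0)) ≤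
        β - (if ω' ∈ A then (1:ℝ) else 0)) :
    ∑ ω ∈ A, q ω ≤ β := by
  have key : ∑ ω' : Ω, q ω' * (∑ ω : Ω, lam ω * (pbar ω - (if ω' = ω then (1:ℝ) else 0)))
      ≤ ∑ ω' : Ω, q ω' * (β - (if ω' ∈ A then (1:ℝ) else 0)) :=
    Finset.sum_le_sum fun ω' _ => mul_le_mul_of_nonneg_left (h ω') (hq0 ω')
  have lhs_eq : ∑ ω' : Ω, q ω' * (∑ ω : Ω, lam ω * (pbar ω - (if ω' = ω then (1:ℝ) else 0)))
      = ∑ ω : Ω, lam ω * (pbar ω - q ω) := by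
    simp_rw [Finset.mul_sum]
    rw [Finset.sum_comm]
    refine Finset.sum_congr rfl fun ω _ => ?_
    simp only [mul_sub, mul_ite, mul_one, mul_zero, Finset.sum_sub_distrib,
      Finset.sum_ite_eq' Finset.univ ω, Finset.mem_univ, if_true]
    rw [← Finset.sum_mul, hq1]
    ring
  have rhs_eq : ∑ ω' : Ω, q ω' * (β - (if ω' ∈ A then (1:ℝ) else 0))
      = β - ∑ ω ∈ A, q ω := by
    simp only [mul_sub, mul_ite, mul_one, mul_zero, Finset.sum_sub_distrib]
    rw [← Finset.sum_mul, hq1, Finset.sum_ite_mem, Finset.univ_inter]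
    ring
  rw [lhs_eq, rhs_eq] at key
  have h0 : (0:ℝ) ≤ ∑ ω : Ω, lam ω * (pbar ω - q ω) :=
    Finset.sum_nonneg fun ω _ => mul_nonneg (hlam ω) (sub_nonneg.2 (hqp ω))
  linarith

/-- Theorem 2.2, upper part: `Ē(A) = min {U(A), 1}`. -/
theorem upperExt_indicator_eq
    {Ω : Type*} [Fintype Ω] [Nonempty Ω] [DecidableEq Ω]
    (pbar : Ω → ℝ) (hpbar : ∀ ω, 0 ≤ pbar ω ∧ pbar ω ≤ 1)
    (hasl : 1 ≤ ∑ ω : Ω, pbar ω) (A : Finset Ω) :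
    upperExt pbar (fun ω => if ω ∈ A then (1 : ℝ) else 0) =
      min (∑ ω ∈ A, pbar ω) 1 := by
  classical
  set U : ℝ := ∑ ω ∈ A, pbar ω with hU
  set S : Set ℝ := {β : ℝ | ∃ lam : Ω → ℝ, (∀ ω, 0 ≤ lam ω) ∧
    ∀ ω' : Ω, ∑ ω : Ω, lam ω * (pbar ω - (if ω' = ω then (1 : ℝ) else 0)) ≤
      β - (if ω' ∈ A then (1:ℝ) else 0)} with hS
  have hUmem : U ∈ S := by
    refine ⟨fun ω => if ω ∈ A then 1 else 0, fun ω => by positivity, fun ω' => ?_⟩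
    have e1 : ∑ ω : Ω, (if ω ∈ A then (1:ℝ) else 0) * (pbar ω - (if ω' = ω then (1:ℝ) else 0))
        = ∑ ω ∈ A, (pbar ω - (if ω' = ω then (1:ℝ) else 0)) := by
      simp only [ite_mul, one_mul, zero_mul]
      rw [Finset.sum_ite_mem, Finset.univ_inter]
    rw [e1, Finset.sum_sub_distrib, Finset.sum_ite_eq, hU]
  have h1mem : (1:ℝ) ∈ S := by
    refine ⟨fun _ => 0, fun _ => le_refl 0, fun ω' => ?_⟩
    simp only [zero_mul, Finset.sum_const_zero]
    split <;> norm_num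
  have hminmem : min U 1 ∈ S := by
    rcases le_total U 1 with h | h
    · rwa [min_eq_left h]
    · rwa [min_eq_right h]
  -- lower bound: every β in S is ≥ min U 1
  have hlb : ∀ β ∈ S, min U 1 ≤ β := by
    rintro β ⟨lam, hlam, h⟩
    rcases le_or_gt 1 U with hU1 | hU1
    · -- U ≥ 1 : q = pbar/U on A, 0 off A
      have hUpos : (0:ℝ) < U := lt_of_lt_of_le one_pos hU1
      set q : Ω → ℝ := fun ω => if ω ∈ A then pbar ω / U else 0 with hq
      have hqA : ∑ ω ∈ A, q ω = 1 := by
        have e : ∀ ω ∈ A, q ω = pbar ω / U := fun ω hω => if_pos hω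
        rw [Finset.sum_congr rfl e, ← Finset.sum_div, ← hU, div_self hUpos.ne']
      have hqtot : ∑ ω : Ω, q ω = 1 := by
        rw [← Finset.sum_add_sum_compl A q, hqA]
        have e : ∀ ω ∈ Aᶜ, q ω = 0 := fun ω hω => if_neg (Finset.mem_compl.mp hω)
        rw [Finset.sum_congr rfl e, Finset.sum_const_zero, add_zero]
      have hb := lower_aux pbar A q
        (fun ω => by
          dsimp only [q]; split
          · exact div_nonneg (hpbar ω).1 hUpos.le
          · exact le_refl 0)
        (fun ω => by
          dsimp only [q]; split
          · exact div_le_self (hpbar ω).1 hU1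
          · exact (hpbar ω).1)
        hqtot β lam hlam h
      rw [hqA] at hb
      exact le_trans (min_le_right _ _) hb
    · -- U < 1
      rw [min_eq_left hU1.le]
      set s : ℝ := ∑ ω ∈ Aᶜ, pbar ω with hs
      have hsplit : U + s = ∑ ω : Ω, pbar ω := Finset.sum_add_sum_compl A pbar
      have hspos : (0:ℝ) < s := by linarith
      set q : Ω → ℝ := fun ω => if ω ∈ A then pbar ω else pbar ω * ((1 - U) / s) with hq
      have hqA : ∑ ω ∈ A, q ω = U := by
        rw [hU]; exact Finset.sum_congr rfl fun ω hω => if_pos hω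
      have hratio : (1 - U) / s ≤ 1 := by
        rw [div_le_one hspos]; linarith
      have hqtot : ∑ ω : Ω, q ω = 1 := by
        rw [← Finset.sum_add_sum_compl A q, hqA]
        have e : ∀ ω ∈ Aᶜ, q ω = pbar ω * ((1 - U) / s) :=
          fun ω hω => if_neg (Finset.mem_compl.mp hω)
        rw [Finset.sum_congr rfl e, ← Finset.sum_mul, ← hs, mul_comm,
          div_mul_cancel₀ _ hspos.ne']
        ring
      have hb := lower_aux pbar A q
        (fun ω => by
          dsimp only [q]; split
          · exact (hpbar ω).1
          · exact mul_nonneg (hpbar ω).1 (div_nonneg (by linarith) hspos.le))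
        (fun ω => by
          dsimp only [q]; split
          · exact le_refl _
          · have := mul_le_mul_of_nonneg_left hratio (hpbar ω).1
            simpa using this)
        hqtot β lam hlam h
      rwa [hqA] at hb
  have hne : S.Nonempty := ⟨1, h1mem⟩
  have hbdd : BddBelow S := ⟨min U 1, hlb⟩
  show sInf S = min U 1
  exact le_antisymm (csInf_le hbdd hminmem) (le_csInf hne hlb)
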